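/- Let T: V → g be an O-operator on a bimodule (V; L, R) over a pre-Lie algebra (g, ·), and let Ω: g → V be a linear map satisfying (i) Ω(x·y) = L_x Ω(y) + R_y Ω(x) and (ii) Ω(x) ·^T Ω(y) = Ω(𝔏^T_{Ω(x)} y + ℜ^T_{Ω(y)} x) for all x,y ∈ g. Then N = T∘Ω is a Nijenhuis operator on (g, ·). -/
import Mathlib

def PreLieFn {g : Type*} [AddCommGroup g] (m : g → g → g) : Prop :=
  ∀ x y z : g, m (m x y) z - m x (m y z) = m (m y x) z - m y (m x z)

def BimodFn {g V : Type*} [AddCommGroup g] [AddCommGroup V]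
    (m : g → g → g) (L R : g → V → V) : Prop :=
  (∀ (x y : g) (u : V), L x (L y u) - L (m x y) u = L y (L x u) - L (m y x) u) ∧
  (∀ (x y : g) (u : V), L x (R y u) - R y (L x u) = R (m x y) u - R y (R x u))

def NijFn {g : Type*} [AddCommGroup g] (m : g → g → g) (N : g → g) : Prop :=
  ∀ x y : g, m (N x) (N y) = N (m (N x) y + m x (N y) - N (m x y))

def IsOOp {K g V : Type*} [Field K] [AddCommGroup g] [Module K g]
    [AddCommGroup V] [Module K V]
    (m : g →ₗ[K] g →ₗ[K] g) (L R : g →ₗ[K] Module.End K V) (T : V →ₗ[K] g) : Prop :=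
  ∀ u v : V, m (T u) (T v) = T (L (T u) v + R (T v) u)

/-- if Ω is a solution of the strong Maurer-Cartan equation on
g ⋈ V_T, then N = T ∘ Ω is a Nijenhuis operator on (g, ·). -/
theorem strong_MC_gives_nijenhuis {K g V : Type*} [Field K]
    [AddCommGroup g] [Module K g] [AddCommGroup V] [Module K V]
    (m : g →ₗ[K] g →ₗ[K] g) (hm : PreLieFn (fun x y => m x y))
    (L R : g →ₗ[K] Module.End K V)
    (hb : BimodFn (fun x y => m x y) (fun x u => L x u) (fun x u => R x u))
    (T : V →ₗ[K] g) (hT : IsOOp m L R T)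
    (Ω : g →ₗ[K] V)
    (hΩ1 : ∀ x y : g, Ω (m x y) = L x (Ω y) + R y (Ω x))
    (hΩ2 : ∀ x y : g,
      L (T (Ω x)) (Ω y) + R (T (Ω y)) (Ω x) =
      Ω ((m (T (Ω x)) y - T (R y (Ω x))) + (m x (T (Ω y)) - T (L x (Ω y))))) :
    NijFn (fun x y => m x y) (fun x : g => T (Ω x)) := by
  intro x y
  show (m (T (Ω x))) (T (Ω y)) = T (Ω ((m (T (Ω x))) y + (m x) (T (Ω y)) - T (Ω ((m x) y))))
  rw [hT (Ω x) (Ω y), hΩ2]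
  congr 2
  rw [hΩ1 x y, map_add]
  abel
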